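/- Let A be the incidence matrix of the subshift Ω_a (for a block a = (a_1,...,a_k) of positive integers) on the alphabet of admissible k-letter words, and let Â_a = Â_{a_k}···Â_{a_1} be the corresponding product of the 3×3 type-transition matrices Â_m = [[0,1,0],[m+1,0,m],[m,0,m-1]]. Then the characteristic polynomial of A equals λ^{N-3} times the characteristic polynomial of Â_a, where N is the alphabet size; in particular A and Â_a have the same spectral radius. -/

import Mathlib

open Polynomial

/-- Validity of a letter of `𝒜_m`, encoded as `(t, j) : Fin 3 × Fin (m + 2)`
where `t` is the type (`0 ↦ 𝟏`, `1 ↦ 𝟐`, `2 ↦ 𝟑`) and `j` represents the index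
`i - 1` (so `𝒜_m = {(𝟏,i) : 1 ≤ i ≤ m+1} ∪ {(𝟐,1)} ∪ {(𝟑,i) : 1 ≤ i ≤ m}`). -/
abbrev okLetter (m : ℕ) (e : Fin 3 × Fin (m + 2)) : Prop :=
  (e.1 = 0 ∧ (e.2 : ℕ) ≤ m) ∨ (e.1 = 1 ∧ (e.2 : ℕ) = 0) ∨ (e.1 = 2 ∧ (e.2 : ℕ) < m)

/-- Admissible transition from a letter of type `t` to the letter
`e ∈ 𝒜_m`: `𝟏 → (𝟐,1)`; `𝟐 → (𝟏,i), i ≤ m+1` or `(𝟑,i), i ≤ m`;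
`𝟑 → (𝟏,i), i ≤ m` or `(𝟑,i), i ≤ m-1`. -/
abbrev okTrans (m : ℕ) (t : Fin 3) (e : Fin 3 × Fin (m + 2)) : Prop :=
  (t = 0 ∧ e.1 = 1 ∧ (e.2 : ℕ) = 0) ∨
  (t = 1 ∧ ((e.1 = 0 ∧ (e.2 : ℕ) ≤ m) ∨ (e.1 = 2 ∧ (e.2 : ℕ) < m))) ∨
  (t = 2 ∧ ((e.1 = 0 ∧ (e.2 : ℕ) < m) ∨ (e.1 = 2 ∧ (e.2 : ℕ) + 1 < m)))

/-- The alphabet `A_a` of `Ω_a` for the block `a = (a₀, …, a_k)` (length `k+1`):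
admissible words `e₀ ⋯ e_k` with `e_i ∈ 𝒜_{a_i}` and admissible consecutive
transitions. -/
abbrev SturmWord (k : ℕ) (a : Fin (k + 1) → ℕ) :=
  {w : ∀ i : Fin (k + 1), Fin 3 × Fin (a i + 2) //
    (∀ i, okLetter (a i) (w i)) ∧
      ∀ i : Fin k, okTrans (a i.succ) ((w i.castSucc).1) (w i.succ)}

/-- The incidence matrix of `Ω_a`: `A v w = 1` iff the tail type of `v` may be
followed by the header of `w` (a letter of `𝒜_{a₀}`). -/
def sturmIncidence (k : ℕ) (a : Fin (k + 1) → ℕ) :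
    Matrix (SturmWord k a) (SturmWord k a) ℚ :=
  fun v w => if okTrans (a 0) ((v.1 (Fin.last k)).1) (w.1 0) then 1 else 0

/-- The 3×3 type-transition matrix `Â_m = [[0,1,0],[m+1,0,m],[m,0,m-1]]`. -/
def AhatM (m : ℕ) : Matrix (Fin 3) (Fin 3) ℚ :=
  !![0, 1, 0; (m : ℚ) + 1, 0, (m : ℚ); (m : ℚ), 0, (m : ℚ) - 1]

/-- The product `Â_a = Â_{a_k} ⋯ Â_{a₀}`. -/
def AhatProd (k : ℕ) (a : Fin (k + 1) → ℕ) : Matrix (Fin 3) (Fin 3) ℚ :=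
  (List.ofFn (fun i : Fin (k + 1) => AhatM (a i.rev))).prod

namespace SturmAux

open Polynomial Matrix

/-! ### Generic helper lemmas -/

lemma charpoly_eq_of_intertwine {n : Type*} [Fintype n] [DecidableEq n]
    (S P Q : Matrix n n ℚ) (hdet : S.det ≠ 0) (h : S * P = Q * S) :
    P.charpoly = Q.charpoly := by
  have hS : (S.map (C : ℚ →+* ℚ[X])) * charmatrix P = charmatrix Q * S.map C := by
    simp only [charmatrix, Matrix.mul_sub, Matrix.sub_mul]
    congr 1
    · exact (scalar_commute (X : ℚ[X]) (Commute.all _) (S.map C)).symm ▸ rfl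
    · have := congrArg (fun M : Matrix n n ℚ => M.map (C : ℚ →+* ℚ[X])) h
      simpa [Matrix.map_mul] using this
  have hdet' : (S.map (C : ℚ →+* ℚ[X])).det ≠ 0 := by
    rw [← RingHom.mapMatrix_apply, ← RingHom.map_det]
    simpa using hdet
  have := congrArg Matrix.det hS
  rw [Matrix.det_mul, Matrix.det_mul, mul_comm ((charmatrix Q).det)] at this
  exact mul_left_cancel₀ hdet' this

lemma charpoly_zero' {n : Type*} [Fintype n] [DecidableEq n] :
    (0 : Matrix n n ℚ).charpoly = X ^ (Fintype.card n) := by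
  simp [Matrix.charpoly, charmatrix, Matrix.det_diagonal]

lemma charpoly_transpose' {n : Type*} [Fintype n] [DecidableEq n] (M : Matrix n n ℚ) :
    M.transpose.charpoly = M.charpoly := by
  rw [Matrix.charpoly, Matrix.charpoly, ← Matrix.det_transpose (charmatrix M)]
  congr 1
  ext i j
  simp only [charmatrix_apply, Matrix.transpose_apply, Matrix.sub_apply,
    Matrix.scalar_apply, Matrix.diagonal_apply, Matrix.map_apply]
  by_cases h : i = j <;> simp [h, eq_comm]

lemma ofFn_rev' {α : Type*} (n : ℕ) (f : Fin n → α) :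
    List.ofFn (fun i => f i.rev) = (List.ofFn f).reverse := by
  apply List.ext_getElem
  · simp
  · intro i h1 h2
    simp only [List.length_ofFn] at h1
    rw [List.getElem_ofFn, List.getElem_reverse, List.getElem_ofFn]
    congr 1
    ext
    simp only [Fin.rev, Fin.val_mk]
    simp only [List.length_ofFn] at h2 ⊢
    omega

lemma sum_subtype_ind {α : Type*} [Fintype α] (p : α → Prop) [DecidablePred p] (f : α → ℚ) :
    ∑ x : {x // p x}, f x.1 = ∑ x : α, if p x then f x else 0 := by
  rw [← Finset.sum_filter]
  exact (Finset.sum_subtype _ (fun x => by simp) f).symm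

lemma card_ind (n : ℕ) (p : ℕ → Prop) [DecidablePred p] (c : ℕ)
    (hp : ∀ j, j < n → (p j ↔ j < c)) (h : c ≤ n) :
    (Finset.univ.filter (fun j : Fin n => p (j : ℕ))).card = c := by
  rw [Finset.card_filter]
  rw [Fin.sum_univ_eq_sum_range (fun i => if p i then 1 else 0)]
  have h2 : ∀ i ∈ Finset.range n, (if p i then 1 else 0) = if i < c then 1 else 0 := by
    intro i hi
    rw [Finset.mem_range] at hi
    by_cases hp' : p i
    · rw [if_pos hp', if_pos ((hp i hi).1 hp')]
    · rw [if_neg hp', if_neg (fun hc => hp' ((hp i hi).2 hc))]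
  rw [Finset.sum_congr rfl h2, ← Finset.sum_filter]
  have : (Finset.range n).filter (fun i => i < c) = Finset.range c := by
    ext i; simp; omega
  simp [this]

/-! ### The counting lemma for a single letter -/

lemma countLemma (m : ℕ) (hm : 1 ≤ m) (t s : Fin 3) :
    ∑ e : Fin 3 × Fin (m + 2),
      (if okLetter m e ∧ okTrans m t e ∧ e.1 = s then (1 : ℚ) else 0)
      = AhatM m t s := by
  rw [Fintype.sum_prod_type, Fin.sum_univ_three]
  fin_cases t <;> fin_cases s <;>
    first
      | (simp only [okLetter, okTrans, AhatM]; norm_num [Fin.ext_iff, -Fin.val_eq_zero_iff]; done)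
      | (simp only [okLetter, okTrans, AhatM]; norm_num [Fin.ext_iff, -Fin.val_eq_zero_iff])
  · exact card_ind (m+2) (fun j => j = 0) 1 (fun j _ => by omega) (by omega)
  · rw [card_ind (m+2) (fun j => j ≤ m) (m+1) (fun j _ => by omega) (by omega)]; push_cast; ring
  · exact card_ind (m+2) (fun j => j < m) m (fun j _ => by omega) (by omega)
  · exact card_ind (m+2) (fun j => j ≤ m ∧ j < m) m (fun j _ => by omega) (by omega)
  · rw [card_ind (m+2) (fun j => j < m ∧ j + 1 < m) (m-1) (fun j _ => by omega) (by omega),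
      Nat.cast_sub hm]; norm_num

/-! ### The B and C matrices -/

noncomputable def Bmat (k : ℕ) (a : Fin (k + 1) → ℕ) : Matrix (SturmWord k a) (Fin 3) ℚ :=
  fun v s => if (v.1 (Fin.last k)).1 = s then 1 else 0

noncomputable def Cmat (k : ℕ) (a : Fin (k + 1) → ℕ) : Matrix (Fin 3) (SturmWord k a) ℚ :=
  fun t w => if okTrans (a 0) t (w.1 0) then 1 else 0

lemma sturm_eq_BC (k : ℕ) (a : Fin (k + 1) → ℕ) :
    sturmIncidence k a = Bmat k a * Cmat k a := by
  ext v w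
  rw [Matrix.mul_apply]
  simp only [Bmat, Cmat, ite_mul, one_mul, zero_mul]
  rw [Finset.sum_ite_eq]
  simp [sturmIncidence]

/-! ### Word-peeling equivalences -/

def wordEquiv0 (a : Fin 1 → ℕ) :
    SturmWord 0 a ≃ {e : Fin 3 × Fin (a 0 + 2) // okLetter (a 0) e} where
  toFun w := ⟨w.1 0, w.2.1 0⟩
  invFun e := ⟨fun i => Fin.cases e.1 (fun j => j.elim0) i,
    ⟨fun i => by
      induction i using Fin.cases with
      | zero => simpa using e.2
      | succ j => exact j.elim0,
     fun i => i.elim0⟩⟩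
  left_inv w := by
    apply Subtype.ext; funext i
    induction i using Fin.cases with
    | zero => simp
    | succ j => exact j.elim0
  right_inv e := by apply Subtype.ext; simp

def wordEquiv (k : ℕ) (a : Fin (k + 2) → ℕ) :
    SturmWord (k + 1) a ≃
      {p : (Fin 3 × Fin (a 0 + 2)) × SturmWord k (fun i => a i.succ) //
        okLetter (a 0) p.1 ∧ okTrans (a (0 : Fin (k + 1)).succ) p.1.1 (p.2.1 0)} where
  toFun w := ⟨(w.1 0, ⟨fun i => w.1 i.succ,
      ⟨fun i => w.2.1 i.succ, fun i => w.2.2 i.succ⟩⟩),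
    ⟨w.2.1 0, w.2.2 0⟩⟩
  invFun p := ⟨Fin.cases p.1.1 (fun i => p.1.2.1 i),
    ⟨fun i => by
        induction i using Fin.cases with
        | zero => simpa using p.2.1
        | succ i => simpa using p.1.2.2.1 i,
      fun j => by
        induction j using Fin.cases with
        | zero => simpa only [Fin.cases_succ, Fin.cases_zero, Fin.castSucc_zero] using p.2.2
        | succ i => simpa using p.1.2.2.2 i⟩⟩
  left_inv w := by
    apply Subtype.ext
    funext i
    induction i using Fin.cases with
    | zero => simp
    | succ i => simp
  right_inv p := by
    apply Subtype.ext
    refine Prod.ext (by simp) (Subtype.ext ?_)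
    funext i
    simp

/-! ### The key combinatorial identity `C * B = Â_{a₀} ⋯ Â_{a_k}` -/

lemma key : ∀ (k : ℕ) (a : Fin (k + 1) → ℕ), (∀ i, 1 ≤ a i) →
    Cmat k a * Bmat k a = (List.ofFn (fun i => AhatM (a i))).prod := by
  intro k
  induction k with
  | zero =>
      intro a ha
      ext t s
      rw [Matrix.mul_apply]
      have h1 : (List.ofFn (fun i : Fin 1 => AhatM (a i))).prod = AhatM (a 0) := by
        simp [List.ofFn_succ]
      rw [h1, ← countLemma (a 0) (ha 0) t s]
      rw [Fintype.sum_equiv (wordEquiv0 a)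
        (fun j => Cmat 0 a t j * Bmat 0 a j s)
        (fun e => (if okTrans (a 0) t e.1 then (1:ℚ) else 0) * (if e.1.1 = s then 1 else 0))
        (fun w => rfl)]
      rw [sum_subtype_ind (fun e => okLetter (a 0) e)
        (fun e => (if okTrans (a 0) t e then (1:ℚ) else 0) * (if e.1 = s then 1 else 0))]
      refine Finset.sum_congr rfl fun x _ => ?_
      by_cases h1 : okLetter (a 0) x <;> by_cases h2 : okTrans (a 0) t x <;>
        by_cases h3 : x.1 = s <;> simp [h1, h2, h3]
  | succ k ih =>
      intro a ha
      have IH := ih (fun i => a i.succ) (fun i => ha _)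
      ext t s
      rw [Matrix.mul_apply]
      rw [Fintype.sum_equiv (wordEquiv k a)
        (fun j => Cmat (k + 1) a t j * Bmat (k + 1) a j s)
        (fun p => (if okTrans (a 0) t p.1.1 then (1:ℚ) else 0)
          * (if (p.1.2.1 (Fin.last k)).1 = s then 1 else 0))
        (fun w => rfl)]
      rw [sum_subtype_ind
        (fun p : (Fin 3 × Fin (a 0 + 2)) × SturmWord k (fun i => a i.succ) =>
          okLetter (a 0) p.1 ∧ okTrans (a (0 : Fin (k + 1)).succ) p.1.1 (p.2.1 0))
        (fun p => (if okTrans (a 0) t p.1 then (1:ℚ) else 0)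
          * (if (p.2.1 (Fin.last k)).1 = s then 1 else 0))]
      rw [Fintype.sum_prod_type]
      have main : ∀ e : Fin 3 × Fin (a 0 + 2),
          (∑ w' : SturmWord k (fun i => a i.succ),
            if okLetter (a 0) e ∧ okTrans (a (0 : Fin (k + 1)).succ) e.1 (w'.1 0) then
              (if okTrans (a 0) t e then (1:ℚ) else 0)
                * (if (w'.1 (Fin.last k)).1 = s then 1 else 0) else 0)
          = ((if okLetter (a 0) e then (1:ℚ) else 0) * (if okTrans (a 0) t e then 1 else 0))
              * ((Cmat k (fun i => a i.succ) * Bmat k (fun i => a i.succ)) e.1 s) := by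
        intro e
        rw [Matrix.mul_apply, Finset.mul_sum]
        refine Finset.sum_congr rfl fun w' _ => ?_
        simp only [Cmat, Bmat]
        by_cases h1 : okLetter (a 0) e <;> by_cases h2 : okTrans (a 0) t e <;>
          by_cases h3 : okTrans (a (0 : Fin (k + 1)).succ) e.1 (w'.1 0) <;>
          by_cases h4 : (w'.1 (Fin.last k)).1 = s <;>
          simp [h1, h2, h3, h4, -Fin.succ_zero_eq_one]
      rw [Finset.sum_congr rfl fun e _ => main e]
      rw [IH]
      set P : Matrix (Fin 3) (Fin 3) ℚ :=
        (List.ofFn (fun i : Fin (k + 1) => AhatM (a i.succ))).prod with hP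
      have expand : ∀ e : Fin 3 × Fin (a 0 + 2),
          ((if okLetter (a 0) e then (1:ℚ) else 0) * (if okTrans (a 0) t e then 1 else 0))
              * P e.1 s
          = ∑ u : Fin 3,
              (if okLetter (a 0) e ∧ okTrans (a 0) t e ∧ e.1 = u then (1:ℚ) else 0) * P u s := by
        intro e
        rw [Finset.sum_congr rfl (fun u _ => by
          by_cases h1 : okLetter (a 0) e <;> by_cases h2 : okTrans (a 0) t e <;>
            by_cases h3 : e.1 = u <;>
            simp [h1, h2, h3] : ∀ u ∈ Finset.univ, _ = if e.1 = u then
              ((if okLetter (a 0) e then (1:ℚ) else 0)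
                * (if okTrans (a 0) t e then (1:ℚ) else 0)) * P u s else 0)]
        rw [Finset.sum_ite_eq]
        simp
      rw [Finset.sum_congr rfl fun e _ => expand e]
      rw [Finset.sum_comm]
      have final : ∀ u : Fin 3,
          (∑ e : Fin 3 × Fin (a 0 + 2),
            (if okLetter (a 0) e ∧ okTrans (a 0) t e ∧ e.1 = u then (1:ℚ) else 0) * P u s)
          = AhatM (a 0) t u * P u s := by
        intro u
        rw [← Finset.sum_mul, countLemma (a 0) (ha 0) t u]
      rw [Finset.sum_congr rfl fun u _ => final u]
      rw [← Matrix.mul_apply]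
      rw [List.ofFn_succ, List.prod_cons]

/-! ### Reversal of the product does not change the characteristic polynomial -/

def Smat : Matrix (Fin 3) (Fin 3) ℚ := !![1,1,-1;1,1,1;-1,1,3]

lemma Smat_det : Smat.det ≠ 0 := by
  rw [Smat, Matrix.det_fin_three]; simp; norm_num

lemma AhatM_transpose (m : ℕ) :
    (AhatM m)ᵀ = !![0, (m:ℚ)+1, (m:ℚ); 1, 0, 0; 0, (m:ℚ), (m:ℚ)-1] := by
  ext i j
  rw [Matrix.transpose_apply]
  fin_cases i <;> fin_cases j <;> rfl

lemma Smat_intertwine (m : ℕ) : Smat * (AhatM m)ᵀ = AhatM m * Smat := by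
  rw [AhatM_transpose, Smat, AhatM, Matrix.mul_fin_three, Matrix.mul_fin_three]
  congr 1 <;> ring

lemma list_intertwine (L : List ℕ) :
    Smat * ((L.map (fun m => (AhatM m)ᵀ)).prod) = (L.map AhatM).prod * Smat := by
  induction L with
  | nil => simp
  | cons m l ih =>
      simp only [List.map_cons, List.prod_cons, ← Matrix.mul_assoc, Smat_intertwine m]
      rw [Matrix.mul_assoc, ih, Matrix.mul_assoc]

lemma rev_prod_charpoly (L : List ℕ) :
    ((L.map AhatM).reverse.prod).charpoly = ((L.map AhatM).prod).charpoly := by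
  have h1 : (L.map AhatM).reverse.prod = ((L.map fun m => (AhatM m)ᵀ).prod)ᵀ := by
    rw [Matrix.transpose_list_prod]
    simp [List.map_map, Function.comp_def]
  rw [h1, charpoly_transpose']
  exact charpoly_eq_of_intertwine Smat _ _ Smat_det (list_intertwine L)

/-! ### The alphabet has at least 4 letters -/

def typeSeq (t : Fin 3) : ℕ → Fin 3
  | 0 => t
  | n + 1 => if typeSeq t n = 0 then 1 else 0

lemma okLetter_zero (m : ℕ) (hm : 1 ≤ m) (c : Fin 3) (v : Fin (m + 2)) (hv : (v : ℕ) = 0) :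
    okLetter m (c, v) := by
  fin_cases c
  · exact Or.inl ⟨rfl, show (v : ℕ) ≤ m by omega⟩
  · exact Or.inr (Or.inl ⟨rfl, hv⟩)
  · exact Or.inr (Or.inr ⟨rfl, show (v : ℕ) < m by omega⟩)

lemma okTrans_step (m : ℕ) (hm : 1 ≤ m) (c : Fin 3) (v : Fin (m + 2)) (hv : (v : ℕ) = 0) :
    okTrans m c ((if c = 0 then 1 else 0 : Fin 3), v) := by
  by_cases h0 : c = 0
  · refine Or.inl ⟨h0, ?_, hv⟩
    show (if c = 0 then (1 : Fin 3) else 0) = 1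
    rw [if_pos h0]
  · have hne : (if c = 0 then (1 : Fin 3) else 0) = 0 := if_neg h0
    fin_cases c
    · exact absurd rfl h0
    · exact Or.inr (Or.inl ⟨rfl, Or.inl ⟨hne, show (v : ℕ) ≤ m by omega⟩⟩)
    · exact Or.inr (Or.inr ⟨rfl, Or.inl ⟨hne, show (v : ℕ) < m by omega⟩⟩)

def mkWord (k : ℕ) (a : Fin (k + 1) → ℕ) (ha : ∀ i, 1 ≤ a i) (t : Fin 3) (j : ℕ)
    (hj : (t = 0 ∧ j ≤ 1) ∨ (t ≠ 0 ∧ j = 0)) : SturmWord k a :=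
  ⟨fun i => (typeSeq t i, ⟨if (i : ℕ) = 0 then j else 0, by
      have := ha i
      rcases hj with ⟨_, h⟩ | ⟨_, h⟩ <;> split <;> omega⟩),
    ⟨fun i => by
      have hI := ha i
      by_cases hi : (i : ℕ) = 0
      · have h1 : typeSeq t (i : ℕ) = t := by rw [hi]; rfl
        rcases hj with ⟨ht, h⟩ | ⟨ht, h⟩
        · exact Or.inl ⟨h1.trans ht,
            show (if (i : ℕ) = 0 then j else 0) ≤ a i by rw [if_pos hi]; omega⟩
        · have h2 : (if (i : ℕ) = 0 then j else 0) = 0 := by rw [if_pos hi, h]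
          exact okLetter_zero (a i) hI _ _ h2
      · exact okLetter_zero (a i) hI _ _ (if_neg hi)
     , fun i => by
      have hI := ha i.succ
      have h0 : (if ((i.succ : Fin (k + 1)) : ℕ) = 0 then j else 0) = 0 :=
        if_neg (Nat.succ_ne_zero _)
      exact okTrans_step (a i.succ) hI (typeSeq t (i : ℕ)) _ h0⟩⟩

lemma card_ge_four (k : ℕ) (a : Fin (k + 1) → ℕ) (ha : ∀ i, 1 ≤ a i) :
    4 ≤ Fintype.card (SturmWord k a) := by
  classical
  let w1 := mkWord k a ha 0 0 (Or.inl ⟨rfl, by omega⟩)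
  let w2 := mkWord k a ha 0 1 (Or.inl ⟨rfl, le_refl 1⟩)
  let w3 := mkWord k a ha 1 0 (Or.inr ⟨by decide, rfl⟩)
  let w4 := mkWord k a ha 2 0 (Or.inr ⟨by decide, rfl⟩)
  have hval : ∀ (t : Fin 3) (j : ℕ) (hj),
      (((mkWord k a ha t j hj).1 0).1, (((mkWord k a ha t j hj).1 0).2 : ℕ)) = (t, j) := by
    intro t j hj
    simp [mkWord, typeSeq]
  have hgf : ∀ p : Fin 4,
      (fun w : SturmWord k a => ((w.1 0).1, ((w.1 0).2 : ℕ))) (![w1, w2, w3, w4] p)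
        = ![((0 : Fin 3), (0 : ℕ)), (0, 1), (1, 0), (2, 0)] p := by
    intro p
    fin_cases p
    · exact hval 0 0 (Or.inl ⟨rfl, by omega⟩)
    · exact hval 0 1 (Or.inl ⟨rfl, le_refl 1⟩)
    · exact hval 1 0 (Or.inr ⟨by decide, rfl⟩)
    · exact hval 2 0 (Or.inr ⟨by decide, rfl⟩)
  have hv : ∀ x y : Fin 4,
      (![((0 : Fin 3), (0 : ℕ)), (0, 1), (1, 0), (2, 0)] x)
        = (![((0 : Fin 3), (0 : ℕ)), (0, 1), (1, 0), (2, 0)] y) → x = y := by decide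
  have hinj : Function.Injective (fun p : Fin 4 => ![w1, w2, w3, w4] p) := by
    intro x y hxy
    apply hv
    have h0 := congrArg (fun w : SturmWord k a => ((w.1 0).1, ((w.1 0).2 : ℕ))) hxy
    exact (hgf x).symm.trans (h0.trans (hgf y))
  calc 4 = Fintype.card (Fin 4) := by simp
  _ ≤ _ := Fintype.card_le_of_injective _ hinj

end SturmAux


/-- The characteristic polynomial of the incidence matrix `A` of `Ω_a` equals
`λ^{N-3}` times the characteristic polynomial of `Â_a = Â_{a_k} ⋯ Â_{a₀}`,
where `N` is the alphabet size; in particular `A` and `Â_a` have the same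
spectral radius. -/
theorem sturmIncidence_charpoly (k : ℕ) (a : Fin (k + 1) → ℕ) (ha : ∀ i, 1 ≤ a i) :
    (sturmIncidence k a).charpoly
        = X ^ (Fintype.card (SturmWord k a) - 3) * (AhatProd k a).charpoly
    ∧ sSup {r : ℝ | ∃ z : ℂ, aeval z (sturmIncidence k a).charpoly = 0
          ∧ r = ‖z‖}
      = sSup {r : ℝ | ∃ z : ℂ, aeval z (AhatProd k a).charpoly = 0
          ∧ r = ‖z‖} := by
  classical
  obtain ⟨N, hNdef⟩ : ∃ n, n = Fintype.card (SturmWord k a) := ⟨_, rfl⟩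
  rw [← hNdef]
  have hN4 : 4 ≤ N := hNdef ▸ SturmAux.card_ge_four k a ha
  obtain ⟨B, hBdef⟩ : ∃ B, B = SturmAux.Bmat k a := ⟨_, rfl⟩
  obtain ⟨C, hCdef⟩ : ∃ C, C = SturmAux.Cmat k a := ⟨_, rfl⟩
  have hBC : sturmIncidence k a = B * C := by
    rw [hBdef, hCdef]; exact SturmAux.sturm_eq_BC k a
  have hCB : C * B = (List.ofFn (fun i => AhatM (a i))).prod := by
    rw [hBdef, hCdef]; exact SturmAux.key k a ha
  obtain ⟨U, hUdef⟩ : ∃ U : Matrix (SturmWord k a ⊕ Fin 3) (SturmWord k a ⊕ Fin 3) ℚ,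
    U = Matrix.fromBlocks 1 B 0 1 := ⟨_, rfl⟩
  obtain ⟨M1, hM1def⟩ : ∃ M : Matrix (SturmWord k a ⊕ Fin 3) (SturmWord k a ⊕ Fin 3) ℚ,
    M = Matrix.fromBlocks (B * C) 0 C 0 := ⟨_, rfl⟩
  obtain ⟨M2, hM2def⟩ : ∃ M : Matrix (SturmWord k a ⊕ Fin 3) (SturmWord k a ⊕ Fin 3) ℚ,
    M = Matrix.fromBlocks 0 0 C (C * B) := ⟨_, rfl⟩
  have hU : U.det ≠ 0 := by
    rw [hUdef, Matrix.det_fromBlocks_zero₂₁]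
    simp
  have hcomm : U * M2 = M1 * U := by
    rw [hUdef, hM1def, hM2def, Matrix.fromBlocks_multiply, Matrix.fromBlocks_multiply]
    congr 1 <;> simp [Matrix.mul_assoc]
  have hch : M2.charpoly = M1.charpoly :=
    SturmAux.charpoly_eq_of_intertwine U M2 M1 hU hcomm
  have h1 : M1.charpoly = (B * C).charpoly * X ^ 3 := by
    rw [hM1def, Matrix.charpoly_fromBlocks_zero₁₂, SturmAux.charpoly_zero']
    simp
  have h2 : M2.charpoly = X ^ N * (C * B).charpoly := by
    rw [hM2def, Matrix.charpoly_fromBlocks_zero₁₂, SturmAux.charpoly_zero', hNdef]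
  have main1 : (B * C).charpoly * X ^ 3 = X ^ N * (C * B).charpoly := by
    rw [← h1, ← hch, h2]
  have hBCchar : (B * C).charpoly = X ^ (N - 3) * (C * B).charpoly := by
    apply mul_right_cancel₀ (pow_ne_zero 3 (X_ne_zero : (X : ℚ[X]) ≠ 0))
    have hXN : (X : ℚ[X]) ^ N = X ^ (N - 3) * X ^ 3 := by
      rw [← pow_add]
      congr 1
      omega
    rw [main1, hXN]
    ring
  have hL : (List.ofFn (fun i : Fin (k + 1) => AhatM (a i))) = (List.ofFn a).map AhatM := by
    rw [List.map_ofFn]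
    rfl
  have hrev : AhatProd k a = ((List.ofFn a).map AhatM).reverse.prod := by
    rw [AhatProd, SturmAux.ofFn_rev' (k + 1) (fun i => AhatM (a i)), hL]
  have hProd : (AhatProd k a).charpoly = (C * B).charpoly := by
    rw [hrev, SturmAux.rev_prod_charpoly, ← hL, hCB]
  have part1 : (sturmIncidence k a).charpoly = X ^ (N - 3) * (AhatProd k a).charpoly := by
    rw [hBC, hBCchar, hProd]
  refine ⟨part1, ?_⟩
  have hmono : (AhatProd k a).charpoly.Monic := Matrix.charpoly_monic _
  have hPne : (AhatProd k a).charpoly ≠ 0 := hmono.ne_zero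
  have hdeg : (AhatProd k a).charpoly.natDegree = 3 := by
    simpa using Matrix.charpoly_natDegree_eq_dim (AhatProd k a)
  have haev : ∀ z : ℂ, (aeval z (AhatProd k a).charpoly = 0)
      ↔ IsRoot ((AhatProd k a).charpoly.map (algebraMap ℚ ℂ)) z := by
    intro z
    rw [IsRoot.def, eval_map, aeval_def]
  have hdm : ((AhatProd k a).charpoly.map (algebraMap ℚ ℂ)) ≠ 0 := Polynomial.map_ne_zero hPne
  have hfin : {z : ℂ | aeval z (AhatProd k a).charpoly = 0}.Finite := by
    have h := Polynomial.finite_setOf_isRoot hdm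
    refine Set.Finite.subset h ?_
    intro z hz
    exact (haev z).1 hz
  have hSP_eq : {r : ℝ | ∃ z : ℂ, aeval z (AhatProd k a).charpoly = 0 ∧ r = ‖z‖}
      = (‖·‖) '' {z : ℂ | aeval z (AhatProd k a).charpoly = 0} := by
    ext r
    constructor
    · rintro ⟨z, hz, rfl⟩
      exact ⟨z, hz, rfl⟩
    · rintro ⟨z, hz, rfl⟩
      exact ⟨z, hz, rfl⟩
  have hbdd : BddAbove {r : ℝ | ∃ z : ℂ, aeval z (AhatProd k a).charpoly = 0
      ∧ r = ‖z‖} := by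
    rw [hSP_eq]
    exact (hfin.image _).bddAbove
  have hex : ∃ z : ℂ, aeval z (AhatProd k a).charpoly = 0 := by
    have hdegm : ((AhatProd k a).charpoly.map (algebraMap ℚ ℂ)).degree ≠ 0 := by
      rw [Polynomial.degree_eq_natDegree hdm,
        Polynomial.natDegree_map_eq_of_injective (algebraMap ℚ ℂ).injective, hdeg]
      decide
    obtain ⟨z, hz⟩ := IsAlgClosed.exists_root ((AhatProd k a).charpoly.map (algebraMap ℚ ℂ)) hdegm
    exact ⟨z, (haev z).2 hz⟩
  obtain ⟨z0, hz0⟩ := hex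
  have hSPne : Set.Nonempty {r : ℝ | ∃ z : ℂ, aeval z (AhatProd k a).charpoly = 0
      ∧ r = ‖z‖} := ⟨‖z0‖, z0, hz0, rfl⟩
  have hd : N - 3 ≠ 0 := by omega
  have hSA : {r : ℝ | ∃ z : ℂ, aeval z (sturmIncidence k a).charpoly = 0 ∧ r = ‖z‖}
      = insert (0 : ℝ)
          {r : ℝ | ∃ z : ℂ, aeval z (AhatProd k a).charpoly = 0 ∧ r = ‖z‖} := by
    ext r
    simp only [part1, Set.mem_setOf_eq, Set.mem_insert_iff, map_mul, map_pow, aeval_X]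
    constructor
    · rintro ⟨z, hz, rfl⟩
      rcases mul_eq_zero.1 hz with h | h
      · rw [pow_eq_zero_iff hd] at h
        left
        simp [h]
      · right
        exact ⟨z, h, rfl⟩
    · rintro (rfl | ⟨z, hz, rfl⟩)
      · exact ⟨0, by simp [zero_pow hd], by simp⟩
      · exact ⟨z, by simp [hz], rfl⟩
  rw [hSA, csSup_insert hbdd hSPne]
  have h0le : (0 : ℝ) ≤ sSup {r : ℝ | ∃ z : ℂ, aeval z (AhatProd k a).charpoly = 0
      ∧ r = ‖z‖} :=
    le_trans (norm_nonneg z0) (le_csSup hbdd ⟨z0, hz0, rfl⟩)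
  exact sup_eq_right.2 h0le
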